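/- (Calibration inequality for contrastive learning.) Let $\mathcal{X},\mathcal{Y}$ be finite spaces, $\tau>0$, and suppose for each $x$ the mass functions $p_x^+, p_x^-$ are everywhere positive. Then for every scoring function $s:\mathcal{X}\times\mathcal{Y}\to\mathbb{R}$, $\mathcal{E}^* - \mathcal{E}(s) \le \sqrt{2/\tau}\,\sqrt{\mathcal{L}(s) - \mathcal{L}^*}$, where $\mathcal{E}$ is the AUC-type retrieval measure with supremum $\mathcal{E}^*$, and $\mathcal{L}$ is the contrastive risk with infimum $\mathcal{L}^*$. -/

import Mathlib

open Finset

/-- The AUC-type retrieval measure. -/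
noncomputable def Escore {X Y : Type*} [Fintype X] [Fintype Y]
    (μX : X → ℝ) (pp pm : X → Y → ℝ) (s : X → Y → ℝ) : ℝ :=
  ∑ x, μX x * ∑ y, ∑ y', pp x y * pm x y' *
    ((if s x y > s x y' then (1:ℝ) else 0) + (1/2) * (if s x y = s x y' then (1:ℝ) else 0))

/-- The contrastive population risk over finite spaces. -/
noncomputable def Lrisk {X Y : Type*} [Fintype X] [Fintype Y]
    (μX : X → ℝ) (pp pm : X → Y → ℝ) (τ : ℝ) (s : X → Y → ℝ) : ℝ :=
  ∑ x, μX x * ∑ y, pp x y *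
    (τ * Real.log (∑ y', pm x y' * Real.exp ((s x y' - s x y)/τ)))



lemma log_ge_one_sub_inv {t : ℝ} (ht : 0 < t) : 1 - 1/t ≤ Real.log t := by
  have h := Real.log_le_sub_one_of_pos (show (0:ℝ) < 1/t by positivity)
  rw [one_div, Real.log_inv] at h
  rw [one_div]
  linarith

/-- h(t) = (t+1) log t - 2(t-1) is monotone on (0,∞). -/
lemma aux_h_mono : MonotoneOn (fun t : ℝ => (t+1) * Real.log t - 2*(t-1)) (Set.Ioi 0) := by
  have hderiv : ∀ t ∈ Set.Ioi (0:ℝ), HasDerivAt (fun t : ℝ => (t+1) * Real.log t - 2*(t-1))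
      (Real.log t + (t+1) * t⁻¹ - 2) t := by
    intro t ht
    have h1 : HasDerivAt (fun t : ℝ => (t+1) * Real.log t) (1 * Real.log t + (t+1) * t⁻¹) t :=
      ((hasDerivAt_id t).add_const 1).mul (Real.hasDerivAt_log (ne_of_gt ht))
    have h2 : HasDerivAt (fun t : ℝ => 2*(t-1)) 2 t := by
      simpa using ((hasDerivAt_id t).sub_const 1).const_mul 2
    have := h1.sub h2; simp only [one_mul] at this; exact this
  apply monotoneOn_of_deriv_nonneg (convex_Ioi 0)
  · exact ContinuousOn.sub (ContinuousOn.mul (by fun_prop)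
      (Real.continuousOn_log.mono (by intro x hx; exact ne_of_gt hx))) (by fun_prop)
  · rw [interior_Ioi]
    intro t ht
    exact (hderiv t ht).differentiableAt.differentiableWithinAt
  · rw [interior_Ioi]
    intro t ht
    rw [(hderiv t ht).deriv]
    have h := log_ge_one_sub_inv ht
    have ht' : (0:ℝ) < t := ht
    have : (t+1) * t⁻¹ = 1 + 1/t := by field_simp
    rw [this]
    linarith

lemma aux_h_sign {t : ℝ} (ht : 0 < t) :
    (1 ≤ t → 0 ≤ (t+1) * Real.log t - 2*(t-1)) ∧
    (t ≤ 1 → (t+1) * Real.log t - 2*(t-1) ≤ 0) := by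
  have h1 : ((1:ℝ)+1) * Real.log 1 - 2*(1-1) = 0 := by simp
  constructor
  · intro h
    have := aux_h_mono (Set.mem_Ioi.mpr one_pos) (Set.mem_Ioi.mpr ht) h
    simpa [h1] using this
  · intro h
    have := aux_h_mono (Set.mem_Ioi.mpr ht) (Set.mem_Ioi.mpr one_pos) h
    simpa [h1] using this

noncomputable def gfun (t : ℝ) : ℝ := (2*t+4)*(t*Real.log t - t + 1) - 3*(t-1)^2

lemma gfun_hasDeriv {t : ℝ} (ht : 0 < t) :
    HasDerivAt gfun (4*((t+1)*Real.log t - 2*(t-1))) t := by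
  have h1 : HasDerivAt (fun t : ℝ => t * Real.log t) (1 * Real.log t + t * t⁻¹) t :=
    (hasDerivAt_id t).mul (Real.hasDerivAt_log (ne_of_gt ht))
  have h2 : HasDerivAt (fun t : ℝ => t*Real.log t - t + 1)
      (1 * Real.log t + t * t⁻¹ - 1) t := (h1.sub (hasDerivAt_id t)).add_const 1
  have h3 : HasDerivAt (fun t : ℝ => 2*t+4) 2 t := by
    simpa using ((hasDerivAt_id t).const_mul 2).add_const 4
  have h4 := h3.mul h2
  have h5 : HasDerivAt (fun t : ℝ => 3*(t-1)^2) (3*(2*(t-1))) t := by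
    simpa using (((hasDerivAt_id t).sub_const 1).pow 2).const_mul 3
  have h6 := h4.sub h5
  have htt : t * t⁻¹ = 1 := mul_inv_cancel₀ (ne_of_gt ht)
  refine HasDerivAt.congr_deriv h6 ?_
  rw [htt]; ring

lemma gfun_nonneg {t : ℝ} (ht : 0 < t) : 0 ≤ gfun t := by
  have hcont : ∀ D : Set ℝ, D ⊆ Set.Ioi 0 → ContinuousOn gfun D := by
    intro D hD
    exact (ContinuousOn.sub (ContinuousOn.mul (by fun_prop)
      (ContinuousOn.add (ContinuousOn.sub (ContinuousOn.mul (by fun_prop)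
        (Real.continuousOn_log.mono (fun x hx => ne_of_gt (hD hx)))) (by fun_prop))
        (by fun_prop))) (by fun_prop))
  have hg1 : gfun 1 = 0 := by simp [gfun]
  rcases le_or_gt 1 t with h | h
  · -- monotone on Ici 1
    have hmono : MonotoneOn gfun (Set.Ici 1) := by
      apply monotoneOn_of_deriv_nonneg (convex_Ici 1)
      · exact hcont _ (fun x hx => Set.mem_Ioi.mpr (lt_of_lt_of_le one_pos (Set.mem_Ici.mp hx)))
      · rw [interior_Ici]
        exact fun x hx => (gfun_hasDeriv (lt_trans one_pos hx)).differentiableAt.differentiableWithinAt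
      · rw [interior_Ici]
        intro x hx
        rw [(gfun_hasDeriv (lt_trans one_pos hx)).deriv]
        have := (aux_h_sign (lt_trans one_pos hx)).1 (le_of_lt hx)
        linarith
    have := hmono (Set.mem_Ici.mpr le_rfl) (Set.mem_Ici.mpr h) h
    rw [hg1] at this; exact this
  · -- antitone on Ioc 0 1
    have hanti : AntitoneOn gfun (Set.Ioc 0 1) := by
      apply antitoneOn_of_deriv_nonpos (convex_Ioc 0 1)
      · exact hcont _ Set.Ioc_subset_Ioi_self
      · rw [interior_Ioc]
        exact fun x hx => (gfun_hasDeriv hx.1).differentiableAt.differentiableWithinAt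
      · rw [interior_Ioc]
        intro x hx
        rw [(gfun_hasDeriv hx.1).deriv]
        have := (aux_h_sign hx.1).2 (le_of_lt hx.2)
        linarith
    have := hanti (Set.mem_Ioc.mpr ⟨ht, le_of_lt h⟩) (Set.mem_Ioc.mpr ⟨one_pos, le_rfl⟩) (le_of_lt h)
    rw [hg1] at this; exact this

/-- Pointwise Pinsker core. -/
lemma pinsker_pointwise {a b : ℝ} (ha : 0 < a) (hb : 0 < b) :
    3*(a-b)^2 ≤ (2*a+4*b) * (a * Real.log (a/b) - a + b) := by
  set t := a/b with hab
  have ht : 0 < t := by positivity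
  have haeq : a = t*b := by rw [hab, div_mul_cancel₀ _ (ne_of_gt hb)]
  have hg := gfun_nonneg ht
  unfold gfun at hg
  have hlog : Real.log (a/b) = Real.log t := rfl
  rw [hlog, haeq]
  nlinarith [sq_nonneg b, mul_nonneg (le_of_lt (mul_pos hb hb)) hg, hb.le]

/-- kl term nonneg -/
lemma klterm_nonneg {a b : ℝ} (ha : 0 < a) (hb : 0 < b) :
    0 ≤ a * Real.log (a/b) - a + b := by
  have h := log_ge_one_sub_inv (show 0 < a/b by positivity)
  have h2 : a * (1 - 1/(a/b)) ≤ a * Real.log (a/b) :=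
    mul_le_mul_of_nonneg_left h ha.le
  have : a * (1 - 1/(a/b)) = a - b := by field_simp
  linarith

/-- Finite Pinsker's inequality. -/
lemma pinsker_finite {Y : Type*} [Fintype Y] {p q : Y → ℝ}
    (hp : ∀ y, 0 < p y) (hq : ∀ y, 0 < q y)
    (hp1 : ∑ y, p y = 1) (hq1 : ∑ y, q y = 1) :
    ∑ y, |p y - q y| ≤ Real.sqrt (2 * ∑ y, p y * Real.log (p y / q y)) := by
  set k : Y → ℝ := fun y => p y * Real.log (p y / q y) - p y + q y with hk
  have hknn : ∀ y, 0 ≤ k y := fun y => klterm_nonneg (hp y) (hq y)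
  have hksum : ∑ y, k y = ∑ y, p y * Real.log (p y / q y) := by
    simp [hk, Finset.sum_add_distrib, Finset.sum_sub_distrib, hp1, hq1]
  set c : Y → ℝ := fun y => (2 * p y + 4 * q y)/3 with hc
  have hcnn : ∀ y, 0 ≤ c y := by
    intro y; have := (hp y).le; have := (hq y).le; positivity
  have hcsum : ∑ y, c y = 2 := by
    simp only [hc]
    rw [← Finset.sum_div, Finset.sum_add_distrib, ← Finset.mul_sum, ← Finset.mul_sum, hp1, hq1]
    norm_num
  -- |p - q| ≤ sqrt (c y * k y)
  have hstep : ∀ y, |p y - q y| ≤ Real.sqrt (c y * k y) := by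
    intro y
    rw [← Real.sqrt_sq_eq_abs]
    apply Real.sqrt_le_sqrt
    have := pinsker_pointwise (hp y) (hq y)
    simp only [hc, hk]
    nlinarith [this]
  have hCS : (∑ y, Real.sqrt (c y * k y))^2 ≤ (∑ y, c y) * (∑ y, k y) :=
    Finset.sum_sq_le_sum_mul_sum_of_sq_eq_mul _ (fun y _ => hcnn y) (fun y _ => hknn y)
      (fun y _ => Real.sq_sqrt (mul_nonneg (hcnn y) (hknn y)))
  have h1 : ∑ y, |p y - q y| ≤ ∑ y, Real.sqrt (c y * k y) :=
    Finset.sum_le_sum (fun y _ => hstep y)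
  have h2 : ∑ y, Real.sqrt (c y * k y) ≤ Real.sqrt (2 * ∑ y, p y * Real.log (p y / q y)) := by
    rw [← hksum]
    apply Real.le_sqrt_of_sq_le
    calc (∑ y, Real.sqrt (c y * k y))^2 ≤ (∑ y, c y) * (∑ y, k y) := hCS
    _ = 2 * ∑ y, k y := by rw [hcsum]
  linarith



noncomputable def phi (p q : ℝ) : ℝ :=
  (if p > q then (1:ℝ) else 0) + (1/2) * (if p = q then (1:ℝ) else 0)

lemma phi_of_gt {p q : ℝ} (h : p > q) : phi p q = 1 := by
  simp [phi, h, ne_of_gt h]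

lemma phi_of_eq {p q : ℝ} (h : p = q) : phi p q = 1/2 := by
  simp [phi, h]

lemma phi_of_lt {p q : ℝ} (h : p < q) : phi p q = 0 := by
  simp [phi, not_lt_of_gt h, ne_of_lt h]

lemma phi_nonneg (p q : ℝ) : 0 ≤ phi p q := by
  unfold phi; split <;> split <;> norm_num

lemma phi_le_one (p q : ℝ) : phi p q ≤ 1 := by
  rcases lt_trichotomy p q with h | h | h
  · rw [phi_of_lt h]; norm_num
  · rw [phi_of_eq h]; norm_num
  · rw [phi_of_gt h]

lemma phi_add_swap (p q : ℝ) : phi p q + phi q p = 1 := by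
  rcases lt_trichotomy p q with h | h | h
  · rw [phi_of_lt h, phi_of_gt h]; norm_num
  · rw [phi_of_eq h, phi_of_eq h.symm]; norm_num
  · rw [phi_of_gt h, phi_of_lt h]; norm_num

noncomputable def Afun {Y : Type*} [Fintype Y] (a b u : Y → ℝ) : ℝ :=
  ∑ y, ∑ y', a y * b y' * phi (u y) (u y')

lemma Afun_two_mul_sub {Y : Type*} [Fintype Y] (a b u v : Y → ℝ) :
    2 * (Afun a b v - Afun a b u) =
      ∑ y, ∑ y', (a y * b y' - a y' * b y) *
        ((phi (v y) (v y') - phi (u y) (u y'))) := by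
  set Δ : Y → Y → ℝ := fun y y' => phi (v y) (v y') - phi (u y) (u y') with hΔ
  have hanti : ∀ y y', Δ y' y = - Δ y y' := by
    intro y y'
    have h1 := phi_add_swap (v y) (v y')
    have h2 := phi_add_swap (u y) (u y')
    simp only [hΔ]; linarith
  have hS : Afun a b v - Afun a b u = ∑ y, ∑ y', (a y * b y') * Δ y y' := by
    unfold Afun
    rw [← Finset.sum_sub_distrib]
    refine Finset.sum_congr rfl fun y _ => ?_
    rw [← Finset.sum_sub_distrib]
    exact Finset.sum_congr rfl fun y' _ => by simp only [hΔ]; ring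
  have hswap : ∑ y, ∑ y', (a y' * b y) * Δ y y' = - ∑ y, ∑ y', (a y * b y') * Δ y y' := by
    rw [Finset.sum_comm]
    rw [← Finset.sum_neg_distrib]
    refine Finset.sum_congr rfl fun y _ => ?_
    rw [← Finset.sum_neg_distrib]
    refine Finset.sum_congr rfl fun y' _ => ?_
    rw [hanti y' y]
    ring
  have hsplit : ∑ y, ∑ y', (a y * b y' - a y' * b y) * Δ y y'
      = (∑ y, ∑ y', (a y * b y') * Δ y y') - ∑ y, ∑ y', (a y' * b y) * Δ y y' := by
    rw [← Finset.sum_sub_distrib]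
    refine Finset.sum_congr rfl fun y _ => ?_
    rw [← Finset.sum_sub_distrib]
    exact Finset.sum_congr rfl fun y' _ => by ring
  rw [hsplit, hswap, hS]
  ring

/-- suboptimality of any score against the likelihood-ratio score -/
lemma Afun_le {Y : Type*} [Fintype Y] (a b u : Y → ℝ)
    (ha : ∀ y, 0 < a y) (hb : ∀ y, 0 < b y) :
    Afun a b u ≤ Afun a b (fun y => a y / b y) := by
  have key : 0 ≤ 2 * (Afun a b (fun y => a y / b y) - Afun a b u) := by
    rw [Afun_two_mul_sub]
    apply Finset.sum_nonneg
    intro y _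
    apply Finset.sum_nonneg
    intro y' _
    rcases lt_trichotomy (a y * b y' ) (a y' * b y) with h | h | h
    · have hr : a y / b y < a y' / b y' := by
        rw [div_lt_div_iff₀ (hb y) (hb y')]; linarith [h]
      rw [phi_of_lt hr]
      have := phi_nonneg (u y) (u y')
      nlinarith
    · rw [h]; simp
    · have hr : a y / b y > a y' / b y' := by
        rw [gt_iff_lt, div_lt_div_iff₀ (hb y') (hb y)]; linarith [h]
      rw [phi_of_gt hr]
      have := phi_le_one (u y) (u y')
      nlinarith
  linarith

lemma Afun_gap {Y : Type*} [Fintype Y] [Nonempty Y] (a b u : Y → ℝ) (τ : ℝ) (hτ : 0 < τ)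
    (ha : ∀ y, 0 < a y) (hb : ∀ y, 0 < b y) (hb1 : ∑ y, b y = 1) :
    Afun a b (fun y => a y / b y) - Afun a b u ≤
      ∑ y, |a y - b y * Real.exp (u y / τ) / (∑ y', b y' * Real.exp (u y' / τ))| := by
  set Z : ℝ := ∑ y', b y' * Real.exp (u y' / τ) with hZ
  have hZpos : 0 < Z := Finset.sum_pos (fun y _ => mul_pos (hb y) (Real.exp_pos _))
    Finset.univ_nonempty
  set qq : Y → ℝ := fun y => b y * Real.exp (u y / τ) / Z with hqq
  -- sign of d vs ordering of u
  have hdlt : ∀ y y', u y < u y' → qq y * b y' < qq y' * b y := by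
    intro y y' h
    have h1 : u y / τ < u y' / τ := by gcongr
    have h2 : Real.exp (u y / τ) < Real.exp (u y' / τ) := Real.exp_lt_exp.mpr h1
    have e1 : qq y * b y' = b y * b y' * Real.exp (u y / τ) / Z := by
      simp only [hqq]; ring
    have e2 : qq y' * b y = b y * b y' * Real.exp (u y' / τ) / Z := by
      simp only [hqq]; ring
    rw [e1, e2]
    apply div_lt_div_of_pos_right ?_ hZpos
    have := mul_pos (hb y) (hb y')
    nlinarith
  have hdeq : ∀ y y', u y = u y' → qq y * b y' = qq y' * b y := by
    intro y y' h
    simp only [hqq, h]; ring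
  -- per-pair bound
  have hterm : ∀ y y', (a y * b y' - a y' * b y) *
      (phi (a y / b y) (a y' / b y') - phi (u y) (u y')) ≤
      |(a y - qq y) * b y' - (a y' - qq y') * b y| := by
    intro y y'
    have hee : (a y - qq y) * b y' - (a y' - qq y') * b y
        = (a y * b y' - a y' * b y) - (qq y * b y' - qq y' * b y) := by ring
    have hre1 : a y * b y' < a y' * b y → phi (a y / b y) (a y' / b y') = 0 := by
      intro h
      apply phi_of_lt
      rw [div_lt_div_iff₀ (hb y) (hb y')]; linarith
    have hre2 : a y * b y' = a y' * b y → phi (a y / b y) (a y' / b y') = 1/2 := by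
      intro h
      apply phi_of_eq
      rw [div_eq_div_iff (ne_of_gt (hb y)) (ne_of_gt (hb y'))]; linarith
    have hre3 : a y' * b y < a y * b y' → phi (a y / b y) (a y' / b y') = 1 := by
      intro h
      apply phi_of_gt
      rw [gt_iff_lt, div_lt_div_iff₀ (hb y') (hb y)]; linarith
    have habs1 : (a y - qq y) * b y' - (a y' - qq y') * b y ≤
        |(a y - qq y) * b y' - (a y' - qq y') * b y| := le_abs_self _
    have habs2 : -((a y - qq y) * b y' - (a y' - qq y') * b y) ≤
        |(a y - qq y) * b y' - (a y' - qq y') * b y| := neg_le_abs _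
    have habs0 : (0:ℝ) ≤ |(a y - qq y) * b y' - (a y' - qq y') * b y| := abs_nonneg _
    rcases lt_trichotomy (u y) (u y') with hu | hu | hu
    · have hphi_u : phi (u y) (u y') = 0 := phi_of_lt hu
      have hdneg := hdlt y y' hu
      rcases lt_trichotomy (a y * b y') (a y' * b y) with hc | hc | hc
      · rw [hphi_u, hre1 hc]; nlinarith
      · rw [hphi_u, hre2 hc]; nlinarith
      · rw [hphi_u, hre3 hc]; nlinarith
    · have hphi_u : phi (u y) (u y') = 1/2 := phi_of_eq hu
      have hdzero := hdeq y y' hu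
      rcases lt_trichotomy (a y * b y') (a y' * b y) with hc | hc | hc
      · rw [hphi_u, hre1 hc]; nlinarith
      · rw [hphi_u, hre2 hc]; nlinarith
      · rw [hphi_u, hre3 hc]; nlinarith
    · have hphi_u : phi (u y) (u y') = 1 := phi_of_gt hu
      have hdpos := hdlt y' y hu
      rcases lt_trichotomy (a y * b y') (a y' * b y) with hc | hc | hc
      · rw [hphi_u, hre1 hc]; nlinarith
      · rw [hphi_u, hre2 hc]; nlinarith
      · rw [hphi_u, hre3 hc]; nlinarith
  -- summation
  have hmain : 2 * (Afun a b (fun y => a y / b y) - Afun a b u) ≤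
      ∑ y, ∑ y', |(a y - qq y) * b y' - (a y' - qq y') * b y| := by
    rw [Afun_two_mul_sub]
    exact Finset.sum_le_sum fun y _ => Finset.sum_le_sum fun y' _ => hterm y y'
  have hbound : ∑ y, ∑ y', |(a y - qq y) * b y' - (a y' - qq y') * b y| ≤
      2 * ∑ y, |a y - qq y| := by
    have step1 : ∀ y y', |(a y - qq y) * b y' - (a y' - qq y') * b y| ≤
        |a y - qq y| * b y' + |a y' - qq y'| * b y := by
      intro y y'
      calc |(a y - qq y) * b y' - (a y' - qq y') * b y|
          ≤ |(a y - qq y) * b y'| + |(a y' - qq y') * b y| := abs_sub _ _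
        _ = |a y - qq y| * b y' + |a y' - qq y'| * b y := by
            rw [abs_mul, abs_mul, abs_of_pos (hb y), abs_of_pos (hb y')]
    calc ∑ y, ∑ y', |(a y - qq y) * b y' - (a y' - qq y') * b y|
        ≤ ∑ y, ∑ y', (|a y - qq y| * b y' + |a y' - qq y'| * b y) :=
          Finset.sum_le_sum fun y _ => Finset.sum_le_sum fun y' _ => step1 y y'
      _ = (∑ y, ∑ y', |a y - qq y| * b y') + ∑ y, ∑ y', |a y' - qq y'| * b y := by
          rw [← Finset.sum_add_distrib]
          exact Finset.sum_congr rfl fun y _ => by rw [← Finset.sum_add_distrib]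
      _ = 2 * ∑ y, |a y - qq y| := by
          have e1 : ∑ y, ∑ y', |a y - qq y| * b y' = ∑ y, |a y - qq y| := by
            refine Finset.sum_congr rfl fun y _ => ?_
            rw [← Finset.mul_sum, hb1, mul_one]
          have e2 : ∑ y : Y, ∑ y' : Y, |a y' - qq y'| * b y = ∑ y, |a y - qq y| := by
            rw [Finset.sum_comm]
            refine Finset.sum_congr rfl fun y' _ => ?_
            rw [← Finset.mul_sum, hb1, mul_one]
          rw [e1, e2]; ring
  linarith

section
variable {Y : Type*} [Fintype Y] [Nonempty Y] {a b u : Y → ℝ} {τ : ℝ}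

lemma Zpos (hb : ∀ y, 0 < b y) : 0 < ∑ y', b y' * Real.exp (u y' / τ) :=
  Finset.sum_pos (fun y _ => mul_pos (hb y) (Real.exp_pos _)) Finset.univ_nonempty

lemma qq_pos (hb : ∀ y, 0 < b y) (y : Y) :
    0 < b y * Real.exp (u y / τ) / (∑ y', b y' * Real.exp (u y' / τ)) :=
  div_pos (mul_pos (hb y) (Real.exp_pos _)) (Zpos hb)

lemma sum_qq_one (hb : ∀ y, 0 < b y) :
    ∑ y, b y * Real.exp (u y / τ) / (∑ y', b y' * Real.exp (u y' / τ)) = 1 := by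
  rw [← Finset.sum_div]
  exact div_self (ne_of_gt (Zpos hb))

/-- The inner-risk identity: risk = τ·KL(a‖q) - τ·KL(a‖b) pointwise in x. -/
lemma risk_inner_eq (hτ : 0 < τ) (ha : ∀ y, 0 < a y) (hb : ∀ y, 0 < b y)
    (ha1 : ∑ y, a y = 1) :
    ∑ y, a y * (τ * Real.log (∑ y', b y' * Real.exp ((u y' - u y) / τ)))
      = τ * ∑ y, a y * Real.log (a y /
          (b y * Real.exp (u y / τ) / (∑ y', b y' * Real.exp (u y' / τ))))
        - τ * ∑ y, a y * Real.log (a y / b y) := by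
  set Z : ℝ := ∑ y', b y' * Real.exp (u y' / τ) with hZ
  have hZpos : 0 < Z := Zpos hb
  rw [Finset.mul_sum, Finset.mul_sum, ← Finset.sum_sub_distrib]
  refine Finset.sum_congr rfl fun y _ => ?_
  have hin : ∑ y', b y' * Real.exp ((u y' - u y) / τ) = Z * Real.exp (-(u y / τ)) := by
    rw [hZ, Finset.sum_mul]
    refine Finset.sum_congr rfl fun y' _ => ?_
    rw [sub_div, Real.exp_sub, Real.exp_neg]
    ring
  have hlog1 : Real.log (∑ y', b y' * Real.exp ((u y' - u y) / τ))
      = Real.log Z - u y / τ := by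
    rw [hin, Real.log_mul (ne_of_gt hZpos) (ne_of_gt (Real.exp_pos _)), Real.log_exp]
    ring
  have hlogq : Real.log (a y / (b y * Real.exp (u y / τ) / Z))
      = Real.log (a y) - (Real.log (b y) + u y / τ - Real.log Z) := by
    rw [Real.log_div (ne_of_gt (ha y)) (ne_of_gt (qq_pos hb y)),
      Real.log_div (ne_of_gt (mul_pos (hb y) (Real.exp_pos _))) (ne_of_gt hZpos),
      Real.log_mul (ne_of_gt (hb y)) (ne_of_gt (Real.exp_pos _)), Real.log_exp]
  have hlogab : Real.log (a y / b y) = Real.log (a y) - Real.log (b y) :=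
    Real.log_div (ne_of_gt (ha y)) (ne_of_gt (hb y))
  rw [hlog1, hlogq, hlogab]
  field_simp
  ring

/-- With the optimal score `u y = τ log (a y / b y)`, the induced Gibbs measure is `a`. -/
lemma qq_opt_eq (hτ : 0 < τ) (ha : ∀ y, 0 < a y) (hb : ∀ y, 0 < b y) (ha1 : ∑ y, a y = 1) :
    ∀ y : Y, b y * Real.exp ((τ * Real.log (a y / b y)) / τ)
      / (∑ y', b y' * Real.exp ((τ * Real.log (a y' / b y')) / τ)) = a y := by
  have hexp : ∀ y : Y, Real.exp ((τ * Real.log (a y / b y)) / τ) = a y / b y := by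
    intro y
    rw [mul_div_cancel_left₀ _ (ne_of_gt hτ)]
    exact Real.exp_log (div_pos (ha y) (hb y))
  intro y
  have hden : ∑ y', b y' * Real.exp ((τ * Real.log (a y' / b y')) / τ) = 1 := by
    rw [show (∑ y', b y' * Real.exp ((τ * Real.log (a y' / b y')) / τ)) = ∑ y', a y' from
      Finset.sum_congr rfl fun y' _ => by
        rw [hexp y', mul_div_cancel₀ _ (ne_of_gt (hb y'))], ha1]
  rw [hden, hexp y, mul_div_cancel₀ _ (ne_of_gt (hb y)), div_one]

lemma KL_nonneg {p q : Y → ℝ} (hp : ∀ y, 0 < p y) (hq : ∀ y, 0 < q y)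
    (hp1 : ∑ y, p y = 1) (hq1 : ∑ y, q y = 1) :
    0 ≤ ∑ y, p y * Real.log (p y / q y) := by
  have h : ∑ y, p y * Real.log (p y / q y)
      = ∑ y, (p y * Real.log (p y / q y) - p y + q y) := by
    rw [Finset.sum_add_distrib, Finset.sum_sub_distrib, hp1, hq1]
    ring
  rw [h]
  refine Finset.sum_nonneg fun y _ => ?_
  have hl := Real.log_le_sub_one_of_pos (div_pos (hq y) (hp y))
  have : Real.log (q y / p y) = - Real.log (p y / q y) := by
    rw [← Real.log_inv, inv_div]
  rw [this] at hl
  have h2 : p y * (1 - q y / p y) ≤ p y * Real.log (p y / q y) := by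
    have := mul_le_mul_of_nonneg_left (by linarith : 1 - q y / p y ≤ Real.log (p y / q y)) (hp y).le
    linarith [this]
  have h3 : p y * (1 - q y / p y) = p y - q y := by
    rw [mul_sub, mul_one, mul_comm, div_mul_cancel₀ _ (ne_of_gt (hp y))]
  linarith
end


/-- Calibration inequality for contrastive learning:
`𝓔* - 𝓔(s) ≤ √(2/τ) √(𝓛(s) - 𝓛*)`, where `𝓔* = sup_s 𝓔(s)` and `𝓛* = inf_s 𝓛(s)`
over all scoring functions. -/
theorem stmt10 {X Y : Type*} [Fintype X] [Fintype Y] [Nonempty Y]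
    (μX : X → ℝ) (pp pm : X → Y → ℝ) (τ : ℝ) (hτ : 0 < τ)
    (hμ : ∀ x, 0 ≤ μX x) (hμ1 : ∑ x, μX x = 1)
    (hpp : ∀ x y, 0 < pp x y) (hpp1 : ∀ x, ∑ y, pp x y = 1)
    (hpm : ∀ x y, 0 < pm x y) (hpm1 : ∀ x, ∑ y, pm x y = 1)
    (s : X → Y → ℝ) :
    sSup (Set.range (Escore μX pp pm)) - Escore μX pp pm s
      ≤ Real.sqrt (2/τ) *
        Real.sqrt (Lrisk μX pp pm τ s - sInf (Set.range (Lrisk μX pp pm τ))) := by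
  classical
  have hE : ∀ u : X → Y → ℝ,
      Escore μX pp pm u = ∑ x, μX x * Afun (pp x) (pm x) (u x) := fun u => rfl
  set q : X → Y → ℝ :=
    fun x y => pm x y * Real.exp (s x y / τ) / (∑ y', pm x y' * Real.exp (s x y' / τ))
    with hqdef
  set KL : X → ℝ := fun x => ∑ y, pp x y * Real.log (pp x y / q x y) with hKLdef
  set KLb : X → ℝ := fun x => ∑ y, pp x y * Real.log (pp x y / pm x y) with hKLbdef
  set sopt : X → Y → ℝ := fun x y => pp x y / pm x y with hsopt
  set slopt : X → Y → ℝ := fun x y => τ * Real.log (pp x y / pm x y) with hslopt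
  have hq1 : ∀ x, ∑ y, q x y = 1 := fun x => sum_qq_one (hpm x)
  have hqpos : ∀ x y, 0 < q x y := fun x y => qq_pos (hpm x) y
  have hKLnn : ∀ x, 0 ≤ KL x := fun x => KL_nonneg (hpp x) (hqpos x) (hpp1 x) (hq1 x)
  -- E-side: optimality of the likelihood-ratio score
  have hEle : ∀ u, Escore μX pp pm u ≤ Escore μX pp pm sopt := by
    intro u
    rw [hE, hE]
    exact Finset.sum_le_sum fun x _ =>
      mul_le_mul_of_nonneg_left (Afun_le (pp x) (pm x) (u x) (hpp x) (hpm x)) (hμ x)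
  have hsSup : sSup (Set.range (Escore μX pp pm)) ≤ Escore μX pp pm sopt :=
    csSup_le (Set.range_nonempty _) (by rintro _ ⟨u, rfl⟩; exact hEle u)
  -- E-side gap bound via total variation
  have hgap : Escore μX pp pm sopt - Escore μX pp pm s
      ≤ ∑ x, μX x * ∑ y, |pp x y - q x y| := by
    rw [hE, hE, ← Finset.sum_sub_distrib]
    refine Finset.sum_le_sum fun x _ => ?_
    rw [← mul_sub]
    exact mul_le_mul_of_nonneg_left
      (Afun_gap (pp x) (pm x) (s x) τ hτ (hpp x) (hpm x) (hpm1 x)) (hμ x)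
  -- Pinsker pointwise in x
  have hchain1 : ∑ x, μX x * ∑ y, |pp x y - q x y|
      ≤ ∑ x, μX x * Real.sqrt (2 * KL x) :=
    Finset.sum_le_sum fun x _ => mul_le_mul_of_nonneg_left
      (pinsker_finite (hpp x) (hqpos x) (hpp1 x) (hq1 x)) (hμ x)
  -- Jensen (Cauchy–Schwarz)
  have hJ : ∑ x, μX x * Real.sqrt (2 * KL x)
      ≤ Real.sqrt (2 * ∑ x, μX x * KL x) := by
    apply Real.le_sqrt_of_sq_le
    have hquad : (∑ x, μX x * Real.sqrt (2 * KL x))^2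
        ≤ (∑ x, μX x) * (∑ x, μX x * (2 * KL x)) := by
      refine Finset.sum_sq_le_sum_mul_sum_of_sq_eq_mul _ (fun x _ => hμ x)
        (fun x _ => mul_nonneg (hμ x) (by linarith [hKLnn x])) (fun x _ => ?_)
      rw [mul_pow, Real.sq_sqrt (by linarith [hKLnn x])]
      ring
    calc (∑ x, μX x * Real.sqrt (2 * KL x))^2
        ≤ (∑ x, μX x) * (∑ x, μX x * (2 * KL x)) := hquad
      _ = 2 * ∑ x, μX x * KL x := by
          rw [hμ1, one_mul, Finset.mul_sum]
          exact Finset.sum_congr rfl fun x _ => by ring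
  -- L-side formula
  have hLform : ∀ u : X → Y → ℝ, Lrisk μX pp pm τ u
      = ∑ x, μX x * (τ * (∑ y, pp x y * Real.log (pp x y /
          (pm x y * Real.exp (u x y / τ) / (∑ y', pm x y' * Real.exp (u x y' / τ)))))
          - τ * KLb x) := by
    intro u
    refine Finset.sum_congr rfl fun x _ => ?_
    congr 1
    exact risk_inner_eq hτ (hpp x) (hpm x) (hpp1 x)
  have hLs : Lrisk μX pp pm τ s = ∑ x, μX x * (τ * KL x - τ * KLb x) := hLform s
  have hLopt : Lrisk μX pp pm τ slopt = ∑ x, μX x * (-(τ * KLb x)) := by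
    rw [hLform slopt]
    refine Finset.sum_congr rfl fun x _ => ?_
    have hz : ∑ y, pp x y * Real.log (pp x y /
        (pm x y * Real.exp (slopt x y / τ) / (∑ y', pm x y' * Real.exp (slopt x y' / τ))))
        = 0 := by
      refine Finset.sum_eq_zero fun y _ => ?_
      rw [qq_opt_eq hτ (hpp x) (hpm x) (hpp1 x) y,
        div_self (ne_of_gt (hpp x y)), Real.log_one, mul_zero]
    rw [hz]
    ring
  have hLlower : ∀ u, Lrisk μX pp pm τ slopt ≤ Lrisk μX pp pm τ u := by
    intro u
    rw [hLopt, hLform u]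
    refine Finset.sum_le_sum fun x _ => ?_
    refine mul_le_mul_of_nonneg_left ?_ (hμ x)
    have hKLu : 0 ≤ ∑ y, pp x y * Real.log (pp x y /
        (pm x y * Real.exp (u x y / τ) / (∑ y', pm x y' * Real.exp (u x y' / τ)))) :=
      KL_nonneg (hpp x) (fun y => qq_pos (hpm x) y) (hpp1 x) (sum_qq_one (hpm x))
    nlinarith
  have hInf : sInf (Set.range (Lrisk μX pp pm τ)) ≤ Lrisk μX pp pm τ slopt :=
    csInf_le ⟨Lrisk μX pp pm τ slopt, by rintro _ ⟨u, rfl⟩; exact hLlower u⟩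
      ⟨slopt, rfl⟩
  have hdiff : Lrisk μX pp pm τ s - Lrisk μX pp pm τ slopt = τ * ∑ x, μX x * KL x := by
    rw [hLs, hLopt, ← Finset.sum_sub_distrib, Finset.mul_sum]
    exact Finset.sum_congr rfl fun x _ => by ring
  -- final chain
  have hfinal1 : Real.sqrt (2 * ∑ x, μX x * KL x)
      = Real.sqrt (2/τ) * Real.sqrt (τ * ∑ x, μX x * KL x) := by
    rw [← Real.sqrt_mul (by positivity : (0:ℝ) ≤ 2/τ)]
    congr 1
    field_simp
  have hfinal2 : Real.sqrt (τ * ∑ x, μX x * KL x)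
      ≤ Real.sqrt (Lrisk μX pp pm τ s - sInf (Set.range (Lrisk μX pp pm τ))) := by
    apply Real.sqrt_le_sqrt
    rw [← hdiff]
    linarith
  calc sSup (Set.range (Escore μX pp pm)) - Escore μX pp pm s
      ≤ Escore μX pp pm sopt - Escore μX pp pm s := by linarith
    _ ≤ ∑ x, μX x * ∑ y, |pp x y - q x y| := hgap
    _ ≤ ∑ x, μX x * Real.sqrt (2 * KL x) := hchain1
    _ ≤ Real.sqrt (2 * ∑ x, μX x * KL x) := hJ
    _ = Real.sqrt (2/τ) * Real.sqrt (τ * ∑ x, μX x * KL x) := hfinal1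
    _ ≤ Real.sqrt (2/τ) *
        Real.sqrt (Lrisk μX pp pm τ s - sInf (Set.range (Lrisk μX pp pm τ))) := by
        exact mul_le_mul_of_nonneg_left hfinal2 (Real.sqrt_nonneg _)
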